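/- Let Q and N be independent random variables taking values in ℕ = {0,1,2,…} with 𝔼[N] < 1, and suppose Q satisfies the distributional fixed-point equation: Q has the same distribution as max(Q−1, 0) + N. Let ν(z) = 𝔼[z^N]. Then P(Q = 0) = 1 − 𝔼[N], and for every z ∈ (0,1), 𝔼[z^Q] = ν(z) · (1−z)/(ν(z) − z) · (1 − 𝔼[N]). -/

import Mathlib

open MeasureTheory ProbabilityTheory Filter Topology

section Aux

variable {Ω : Type*} [MeasureSpace Ω] [IsProbabilityMeasure (ℙ : Measure Ω)]

lemma stmt11_meas_comp {X : Ω → ℕ} (hX : Measurable X) (f : ℕ → ℝ) :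
    Measurable fun ω => f (X ω) :=
  (measurable_from_top (f := f)).comp hX

lemma stmt11_integrable_pow {X : Ω → ℕ} (hX : Measurable X) {z : ℝ}
    (h0 : 0 ≤ z) (h1 : z ≤ 1) : Integrable (fun ω => z ^ X ω) ℙ := by
  refine (integrable_const (1 : ℝ)).mono'
    (stmt11_meas_comp hX (fun n => z ^ n)).aestronglyMeasurable ?_
  filter_upwards with ω
  rw [Real.norm_eq_abs, abs_of_nonneg (pow_nonneg h0 _)]
  exact pow_le_one₀ h0 h1

lemma stmt11_key (Q N : Ω → ℕ) (hQ : Measurable Q) (hN : Measurable N)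
    (hind : IndepFun Q N ℙ)
    (hfix : Measure.map Q ℙ = Measure.map (fun ω => max (Q ω - 1) 0 + N ω) ℙ)
    {z : ℝ} (hz0 : 0 < z) (hz1 : z < 1) :
    ((∫ ω, z ^ N ω) - z) * (∫ ω, z ^ Q ω)
      = (∫ ω, z ^ N ω) * (1 - z) * (ℙ {ω | Q ω = 0}).toReal := by
  have hmQ1 : Measurable fun ω => Q ω - 1 :=
    (measurable_from_top (f := fun n : ℕ => n - 1)).comp hQ
  -- step 1 : E[z^Q] = E[z^(Q-1)] * E[z^N]
  have h1 : (∫ ω, z ^ Q ω) = (∫ ω, z ^ (Q ω - 1)) * ∫ ω, z ^ N ω := by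
    have hmap : Measurable fun ω => max (Q ω - 1) 0 + N ω :=
      (hmQ1.max measurable_const).add hN
    have e1 : (∫ ω, z ^ Q ω) = ∫ ω, z ^ (max (Q ω - 1) 0 + N ω) := by
      rw [← integral_map hQ.aemeasurable
          (measurable_from_top (f := fun n : ℕ => z ^ n)).aestronglyMeasurable,
        hfix,
        integral_map hmap.aemeasurable
          (measurable_from_top (f := fun n : ℕ => z ^ n)).aestronglyMeasurable]
    have e2 : ∀ ω, z ^ (max (Q ω - 1) 0 + N ω) = z ^ (Q ω - 1) * z ^ N ω := by
      intro ω; rw [Nat.max_zero, pow_add]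
    rw [e1]
    simp_rw [e2]
    have hindc : IndepFun (fun ω => z ^ (Q ω - 1)) (fun ω => z ^ N ω) ℙ := by
      have h' : IndepFun (fun ω => Q ω - 1) N ℙ :=
        hind.comp (measurable_from_top (f := fun n : ℕ => n - 1)) measurable_id
      exact h'.comp (measurable_from_top (f := fun n : ℕ => z ^ n))
        (measurable_from_top (f := fun n : ℕ => z ^ n))
    exact hindc.integral_mul_eq_mul_integral (stmt11_meas_comp hmQ1 (fun n => z ^ n)).aestronglyMeasurable
      (stmt11_meas_comp hN (fun n => z ^ n)).aestronglyMeasurable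
  -- indicator integral
  have hInd : (∫ ω, (if Q ω = 0 then (1 : ℝ) else 0)) = (ℙ {ω | Q ω = 0}).toReal := by
    have e : (fun ω => if Q ω = 0 then (1 : ℝ) else 0)
        = Set.indicator {ω | Q ω = 0} (1 : Ω → ℝ) := by
      ext ω; simp [Set.indicator_apply]
    rw [e]
    exact integral_indicator_one (show MeasurableSet {ω | Q ω = 0} from
      hQ (measurableSet_singleton 0))
  have hIndInt : Integrable (fun ω => if Q ω = 0 then (1 : ℝ) else 0) ℙ := by
    refine (integrable_const (1 : ℝ)).mono'
      (stmt11_meas_comp hQ (fun n => if n = 0 then 1 else 0)).aestronglyMeasurable ?_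
    filter_upwards with ω
    by_cases h : Q ω = 0 <;> simp [h]
  -- step 2 : z * E[z^(Q-1)] = E[z^Q] + (z-1) * p0
  have h2 : z * ∫ ω, z ^ (Q ω - 1)
      = (∫ ω, z ^ Q ω) + (z - 1) * (ℙ {ω | Q ω = 0}).toReal := by
    have point' : ∀ n : ℕ, z * z ^ (n - 1)
        = z ^ n + (z - 1) * (if n = 0 then (1 : ℝ) else 0) := by
      intro n
      cases n with
      | zero => norm_num
      | succ m =>
          simp only [Nat.succ_sub_one, Nat.succ_ne_zero, if_false, pow_succ]; ring
    have point : ∀ ω, z * z ^ (Q ω - 1)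
        = z ^ Q ω + (z - 1) * (if Q ω = 0 then (1 : ℝ) else 0) := fun ω => point' (Q ω)
    calc z * ∫ ω, z ^ (Q ω - 1) = ∫ ω, z * z ^ (Q ω - 1) := (integral_const_mul z _).symm
      _ = ∫ ω, (z ^ Q ω + (z - 1) * (if Q ω = 0 then (1 : ℝ) else 0)) := by simp_rw [point]
      _ = (∫ ω, z ^ Q ω) + (z - 1) * (ℙ {ω | Q ω = 0}).toReal := by
          rw [integral_add (stmt11_integrable_pow hQ hz0.le hz1.le) (hIndInt.const_mul _),
            integral_const_mul, hInd]
  set φ := ∫ ω, z ^ Q ω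
  set ν := ∫ ω, z ^ N ω
  set E' := ∫ ω, z ^ (Q ω - 1)
  set p := (ℙ {ω | Q ω = 0}).toReal
  linear_combination (-z) * h1 - ν * h2

end Aux

/-- Stationary queue-length generating function: if `Q` and `N` are independent
`ℕ`-valued random variables with `E[N] < 1` and `Q =_d max(Q-1,0) + N`, then
`P(Q = 0) = 1 - E[N]` and for `z ∈ (0,1)`,
`E[z^Q] = ν(z)·(1-z)/(ν(z)-z)·(1-E[N])`, where `ν(z) = E[z^N]`. -/
theorem stmt11 {Ω : Type*} [MeasureSpace Ω] [IsProbabilityMeasure (ℙ : Measure Ω)]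
    (Q N : Ω → ℕ) (hQ : Measurable Q) (hN : Measurable N)
    (hind : IndepFun Q N ℙ)
    (hint : Integrable (fun ω => (N ω : ℝ)))
    (hmean : ∫ ω, (N ω : ℝ) < 1)
    (hfix : Measure.map Q ℙ = Measure.map (fun ω => max (Q ω - 1) 0 + N ω) ℙ) :
    (ℙ {ω | Q ω = 0}).toReal = 1 - ∫ ω, (N ω : ℝ) ∧
    ∀ z ∈ Set.Ioo (0 : ℝ) 1,
      ∫ ω, z ^ Q ω =
        (∫ ω, z ^ N ω) * (1 - z) / ((∫ ω, z ^ N ω) - z) * (1 - ∫ ω, (N ω : ℝ)) := by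
  set μN := ∫ ω, (N ω : ℝ) with hμN
  set p0 := (ℙ {ω | Q ω = 0}).toReal with hp0def
  -- the approximating sequence
  set ζ : ℕ → ℝ := fun k => 1 - 1 / ((k : ℝ) + 2) with hζdef
  have hζpos : ∀ k, 0 < ζ k := by
    intro k
    have hk0 : (0 : ℝ) ≤ (k : ℝ) := Nat.cast_nonneg k
    have : 1 / ((k : ℝ) + 2) ≤ 1 / 2 :=
      one_div_le_one_div_of_le (by norm_num) (by linarith)
    simp only [hζdef]; linarith
  have hζlt : ∀ k, ζ k < 1 := by
    intro k
    have : 0 < 1 / ((k : ℝ) + 2) := by positivity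
    simp only [hζdef]; linarith
  have hζmono : Monotone ζ := by
    intro k l hkl
    have : 1 / ((l : ℝ) + 2) ≤ 1 / ((k : ℝ) + 2) := by
      apply one_div_le_one_div_of_le
      · positivity
      · have := (Nat.cast_le (α := ℝ)).mpr hkl; linarith
    simp only [hζdef]; linarith
  have hζtend : Tendsto ζ atTop (𝓝 1) := by
    have h1 : Tendsto (fun k : ℕ => (k : ℝ) + 2) atTop atTop :=
      tendsto_atTop_add_const_right _ _ tendsto_natCast_atTop_atTop
    have h2 : Tendsto (fun k : ℕ => 1 / ((k : ℝ) + 2)) atTop (𝓝 0) := by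
      simp only [one_div]; exact h1.inv_tendsto_atTop
    have h3 := (tendsto_const_nhds (x := (1 : ℝ)) (f := atTop)).sub h2
    rw [hζdef]
    simpa using h3
  -- limits of integrals
  have hQlim : Tendsto (fun k => ∫ ω, (ζ k) ^ Q ω) atTop (𝓝 1) := by
    have h := integral_tendsto_of_tendsto_of_monotone (μ := ℙ)
      (f := fun k ω => (ζ k) ^ Q ω) (F := fun _ => (1 : ℝ))
      (fun k => stmt11_integrable_pow hQ (hζpos k).le (hζlt k).le) (integrable_const 1)
      (ae_of_all _ fun ω k l hkl => pow_le_pow_left₀ (hζpos k).le (hζmono hkl) _)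
      (ae_of_all _ fun ω => by simpa using hζtend.pow (Q ω))
    simpa using h
  have hNlim : Tendsto (fun k => ∫ ω, (ζ k) ^ N ω) atTop (𝓝 1) := by
    have h := integral_tendsto_of_tendsto_of_monotone (μ := ℙ)
      (f := fun k ω => (ζ k) ^ N ω) (F := fun _ => (1 : ℝ))
      (fun k => stmt11_integrable_pow hN (hζpos k).le (hζlt k).le) (integrable_const 1)
      (ae_of_all _ fun ω k l hkl => pow_le_pow_left₀ (hζpos k).le (hζmono hkl) _)
      (ae_of_all _ fun ω => by simpa using hζtend.pow (N ω))
    simpa using h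
  have hGint : ∀ k, Integrable (fun ω => ∑ i ∈ Finset.range (N ω), (ζ k) ^ i) ℙ := by
    intro k
    refine hint.mono'
      (stmt11_meas_comp hN (fun n => ∑ i ∈ Finset.range n, (ζ k) ^ i)).aestronglyMeasurable ?_
    filter_upwards with ω
    rw [Real.norm_eq_abs,
      abs_of_nonneg (Finset.sum_nonneg fun i _ => pow_nonneg (hζpos k).le i)]
    calc ∑ i ∈ Finset.range (N ω), (ζ k) ^ i
        ≤ ∑ _i ∈ Finset.range (N ω), (1 : ℝ) :=
          Finset.sum_le_sum fun i _ => pow_le_one₀ (hζpos k).le (hζlt k).le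
      _ = (N ω : ℝ) := by simp
  have hGlim : Tendsto (fun k => ∫ ω, ∑ i ∈ Finset.range (N ω), (ζ k) ^ i) atTop (𝓝 μN) := by
    exact integral_tendsto_of_tendsto_of_monotone (μ := ℙ)
      (f := fun k ω => ∑ i ∈ Finset.range (N ω), (ζ k) ^ i) (F := fun ω => (N ω : ℝ))
      hGint hint
      (ae_of_all _ fun ω k l hkl =>
        Finset.sum_le_sum fun i _ => pow_le_pow_left₀ (hζpos k).le (hζmono hkl) i)
      (ae_of_all _ fun ω => by
        have := tendsto_finset_sum (Finset.range (N ω)) (fun i _ => hζtend.pow i)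
        simpa using this)
  -- relation between ν and the geometric sums
  have hbc : ∀ k, 1 - (∫ ω, (ζ k) ^ N ω)
      = (1 - ζ k) * ∫ ω, ∑ i ∈ Finset.range (N ω), (ζ k) ^ i := by
    intro k
    have point : ∀ ω, (1 - ζ k) * ∑ i ∈ Finset.range (N ω), (ζ k) ^ i
        = 1 - (ζ k) ^ N ω := by
      intro ω
      linear_combination -geom_sum_mul (ζ k) (N ω)
    rw [← integral_const_mul]
    simp_rw [point]
    rw [integral_sub (integrable_const 1) (stmt11_integrable_pow hN (hζpos k).le (hζlt k).le),
      integral_const]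
    simp
  -- the per-k identity
  have hk : ∀ k, (1 - ∫ ω, ∑ i ∈ Finset.range (N ω), (ζ k) ^ i) * (∫ ω, (ζ k) ^ Q ω)
      = (∫ ω, (ζ k) ^ N ω) * p0 := by
    intro k
    have h1 := stmt11_key Q N hQ hN hind hfix (hζpos k) (hζlt k)
    have h2 := hbc k
    have hne : (1 : ℝ) - ζ k ≠ 0 := sub_ne_zero.mpr (hζlt k).ne'
    apply mul_left_cancel₀ hne
    rw [← hp0def] at h1
    linear_combination h1 + (∫ ω, (ζ k) ^ Q ω) * h2
  -- part 1 : p0 = 1 - E[N]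
  have part1 : p0 = 1 - μN := by
    have L1 : Tendsto (fun k => (1 - ∫ ω, ∑ i ∈ Finset.range (N ω), (ζ k) ^ i)
        * (∫ ω, (ζ k) ^ Q ω)) atTop (𝓝 ((1 - μN) * 1)) :=
      (tendsto_const_nhds.sub hGlim).mul hQlim
    have L2 : Tendsto (fun k => (∫ ω, (ζ k) ^ N ω) * p0) atTop (𝓝 (1 * p0)) :=
      hNlim.mul tendsto_const_nhds
    have := tendsto_nhds_unique (L1.congr hk) L2
    linarith [this]
  refine ⟨part1, fun z hz => ?_⟩
  obtain ⟨hz0, hz1⟩ := hz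
  -- positivity of ν(z) - z
  have hνz : 0 < (∫ ω, z ^ N ω) - z := by
    have bern : ∀ ω, 1 + (N ω : ℝ) * (z - 1) ≤ z ^ N ω := by
      intro ω
      have h := one_add_mul_le_pow (a := z - 1) (by linarith) (N ω)
      calc 1 + (N ω : ℝ) * (z - 1) = 1 + (N ω : ℕ) * (z - 1) := by push_cast; ring
        _ ≤ (1 + (z - 1)) ^ N ω := h
        _ = z ^ N ω := by norm_num
    have hmono' : (∫ ω, (1 + (N ω : ℝ) * (z - 1))) ≤ ∫ ω, z ^ N ω := by
      apply integral_mono ((integrable_const 1).add (hint.mul_const _))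
        (stmt11_integrable_pow hN hz0.le hz1.le) bern
    have hL : (∫ ω, (1 + (N ω : ℝ) * (z - 1))) = 1 + μN * (z - 1) := by
      rw [integral_add (integrable_const 1) (hint.mul_const _), integral_const,
        integral_mul_const]
      simp [hμN]
    rw [hL] at hmono'
    nlinarith [hmean, hz1]
  have hne : (∫ ω, z ^ N ω) - z ≠ 0 := hνz.ne'
  have key := stmt11_key Q N hQ hN hind hfix hz0 hz1
  rw [← hp0def, part1] at key
  rw [div_mul_eq_mul_div, eq_div_iff hne]
  linear_combination key
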